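/- For a fixed unit vector u ∈ ℝ^m and φ ∈ [0, π/4), the set of lines (1-dimensional subspaces) spanned by unit vectors x with |⟨x,u⟩| ≥ cos(φ) is geodesically convex in the Grassmannian Gr(m,1): for any two such lines spanned by unit vectors x, y with ⟨x,y⟩ ≥ 0, every unit vector g = αx + βy with α, β ≥ 0 satisfies |⟨g,u⟩| ≥ cos(φ). -/
import Mathlib

set_option maxHeartbeats 1000000

open RealInnerProductSpace

/-- Auxiliary: if `x` is within angle `arccos k` of `u` and `y` within the same
angle of `-u`, with `k^2 > 1/2`, then `⟪x,y⟫ < 0`. -/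
lemma aux_opposite_cone {m : ℕ}
    (u x y : EuclideanSpace ℝ (Fin m)) (hu : ‖u‖ = 1) (hx : ‖x‖ = 1) (hy : ‖y‖ = 1)
    (k : ℝ) (hk0 : 0 < k) (hk : 1/2 < k^2)
    (h1 : k ≤ ⟪x, u⟫) (h2 : ⟪y, u⟫ ≤ -k) : ⟪x, y⟫ < 0 := by
  set a : ℝ := ⟪x, u⟫ with ha
  set b : ℝ := ⟪y, u⟫ with hb
  set c : ℝ := ⟪x, y⟫ with hc
  have huu : ⟪u, u⟫ = (1:ℝ) := by rw [real_inner_self_eq_norm_sq, hu]; norm_num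
  have hxx : ⟪x, x⟫ = (1:ℝ) := by rw [real_inner_self_eq_norm_sq, hx]; norm_num
  have hyy : ⟪y, y⟫ = (1:ℝ) := by rw [real_inner_self_eq_norm_sq, hy]; norm_num
  have hs : ⟪x - a • u, y - b • u⟫ = c - a * b := by
    simp only [inner_sub_left, inner_sub_right, real_inner_smul_left, real_inner_smul_right,
      huu, ← ha, ← hb, ← hc]
    rw [show (⟪u,y⟫:ℝ) = b by rw [hb, real_inner_comm]]
    ring
  have hnx : ‖x - a • u‖^2 = 1 - a^2 := by
    rw [← real_inner_self_eq_norm_sq]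
    simp only [inner_sub_left, inner_sub_right, real_inner_smul_left, real_inner_smul_right,
      huu, hxx, ← ha]
    rw [show (⟪u,x⟫:ℝ) = a by rw [ha, real_inner_comm]]
    ring
  have hny : ‖y - b • u‖^2 = 1 - b^2 := by
    rw [← real_inner_self_eq_norm_sq]
    simp only [inner_sub_left, inner_sub_right, real_inner_smul_left, real_inner_smul_right,
      huu, hyy, ← hb]
    rw [show (⟪u,y⟫:ℝ) = b by rw [hb, real_inner_comm]]
    ring
  have hle := real_inner_le_norm (x - a • u) (y - b • u)
  rw [hs] at hle
  set p : ℝ := ‖x - a • u‖ with hp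
  set q : ℝ := ‖y - b • u‖ with hq
  have hp0 : 0 ≤ p := norm_nonneg _
  have hq0 : 0 ≤ q := norm_nonneg _
  have hb1 : p^2 ≤ 1 - k^2 := by nlinarith [sq_nonneg (a - k)]
  have hb2 : q^2 ≤ 1 - k^2 := by nlinarith [sq_nonneg (b + k)]
  have hk1 : 0 ≤ 1 - k^2 := le_trans (sq_nonneg p) hb1
  have hpq : p * q ≤ 1 - k^2 := by nlinarith [sq_nonneg (p - q)]
  have hprod : 0 ≤ (a - k) * (-k - b) := mul_nonneg (by linarith) (by linarith)
  have hab : a * b ≤ -k^2 := by nlinarith [hprod, h1, h2, hk0]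
  nlinarith [hle, hpq, hab, hk]

/-- geodesic convexity in `Gr(m,1)` of the set of lines within principal
angle `φ < π/4` of a fixed unit vector `u`: if `x, y` are unit vectors with
`|⟨x,u⟩| ≥ cos φ`, `|⟨y,u⟩| ≥ cos φ` and `⟨x,y⟩ ≥ 0`, then every unit vector
`g = α•x + β•y` with `α, β ≥ 0` satisfies `|⟨g,u⟩| ≥ cos φ`. -/
theorem rank_one_geodesic_convexity {m : ℕ}
    (u : EuclideanSpace ℝ (Fin m)) (hu : ‖u‖ = 1)
    (φ : ℝ) (hφ : φ ∈ Set.Ico 0 (Real.pi / 4))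
    (x y : EuclideanSpace ℝ (Fin m)) (hx : ‖x‖ = 1) (hy : ‖y‖ = 1)
    (hxu : Real.cos φ ≤ |⟪x, u⟫|) (hyu : Real.cos φ ≤ |⟪y, u⟫|)
    (hxy : 0 ≤ ⟪x, y⟫)
    (α β : ℝ) (hα : 0 ≤ α) (hβ : 0 ≤ β)
    (g : EuclideanSpace ℝ (Fin m)) (hg : g = α • x + β • y) (hgn : ‖g‖ = 1) :
    Real.cos φ ≤ |⟪g, u⟫| := by
  obtain ⟨hφ0, hφ1⟩ := hφ
  set a : ℝ := ⟪x, u⟫ with ha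
  set b : ℝ := ⟪y, u⟫ with hb
  set c : ℝ := ⟪x, y⟫ with hc
  have hcospos : Real.cos (Real.pi / 4) < Real.cos φ := by
    apply Real.cos_lt_cos_of_nonneg_of_le_pi hφ0 _ hφ1
    linarith [Real.pi_pos]
  rw [Real.cos_pi_div_four] at hcospos
  have hsqrt2 : (1:ℝ) < Real.sqrt 2 := by
    nlinarith [Real.sq_sqrt (by norm_num : (2:ℝ) ≥ 0), Real.sqrt_nonneg 2]
  have hcos2 : (1:ℝ)/2 < Real.cos φ ^ 2 := by
    nlinarith [Real.sq_sqrt (by norm_num : (2:ℝ) ≥ 0), Real.sqrt_nonneg 2]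
  have hcpos : 0 < Real.cos φ := by nlinarith
  have hxx : ⟪x, x⟫ = (1:ℝ) := by rw [real_inner_self_eq_norm_sq, hx]; norm_num
  have hyy : ⟪y, y⟫ = (1:ℝ) := by rw [real_inner_self_eq_norm_sq, hy]; norm_num
  have hgu : ⟪g, u⟫ = α * a + β * b := by
    rw [hg, inner_add_left, real_inner_smul_left, real_inner_smul_left]
  have hnorm : α^2 + β^2 + 2*α*β*c = 1 := by
    have h1 : ⟪g, g⟫ = (1:ℝ) := by rw [real_inner_self_eq_norm_sq, hgn]; norm_num
    rw [hg] at h1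
    simp only [inner_add_left, inner_add_right, real_inner_smul_left, real_inner_smul_right,
      hxx, hyy, ← hc] at h1
    rw [show (⟪y,x⟫:ℝ) = c by rw [hc, real_inner_comm]] at h1
    nlinarith [h1]
  have hCS : |c| ≤ 1 := by
    have := abs_real_inner_le_norm x y
    rw [hx, hy] at this; simpa [hc] using this
  have hc1 : c ≤ 1 := (abs_le.mp hCS).2
  have hsum : 1 ≤ α + β := by
    nlinarith [hnorm, mul_nonneg hα hβ, hc1, add_nonneg hα hβ,
      mul_nonneg (mul_nonneg hα hβ) (sub_nonneg.mpr hc1)]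
  rcases le_or_gt 0 a with haa | haa <;> rcases le_or_gt 0 b with hba | hba
  · -- both nonneg
    have h1 : Real.cos φ ≤ a := by rwa [abs_of_nonneg haa] at hxu
    have h2 : Real.cos φ ≤ b := by rwa [abs_of_nonneg hba] at hyu
    rw [hgu]
    calc Real.cos φ ≤ α * a + β * b := by nlinarith
      _ ≤ |α * a + β * b| := le_abs_self _
  · -- a ≥ 0, b < 0 : contradiction
    exfalso
    have h1 : Real.cos φ ≤ a := by rwa [abs_of_nonneg haa] at hxu
    have h2 : b ≤ -Real.cos φ := by rw [abs_of_neg hba] at hyu; linarith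
    have := aux_opposite_cone u x y hu hx hy (Real.cos φ) hcpos hcos2 h1 h2
    rw [← hc] at this; linarith
  · -- a < 0, b ≥ 0 : contradiction
    exfalso
    have h1 : Real.cos φ ≤ b := by rwa [abs_of_nonneg hba] at hyu
    have h2 : a ≤ -Real.cos φ := by rw [abs_of_neg haa] at hxu; linarith
    have := aux_opposite_cone u y x hu hy hx (Real.cos φ) hcpos hcos2 h1 h2
    rw [show (⟪y,x⟫:ℝ) = c by rw [hc, real_inner_comm]] at this; linarith
  · -- both negative
    have h1 : a ≤ -Real.cos φ := by rw [abs_of_neg haa] at hxu; linarith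
    have h2 : b ≤ -Real.cos φ := by rw [abs_of_neg hba] at hyu; linarith
    rw [hgu]
    have hneg : α * a + β * b ≤ -Real.cos φ := by nlinarith
    calc Real.cos φ ≤ -(α * a + β * b) := by linarith
      _ ≤ |α * a + β * b| := neg_le_abs _
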